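/- Let A = B ⊕ J(A) be a finite dimensional superalgebra over a field F of characteristic zero, with maximal graded semisimple part B of graded dimensions (t₀, t₁) = (dim B_0, dim B_1) and Jacobson radical J(A) nilpotent of degree nd(A). Suppose f is a multilinear graded polynomial containing nd(A) disjoint sets Y_1,...,Y_{nd(A)} of variables such that for each j, f is alternating in the homogeneous subset Y_{j,θ} ⊆ Y_j of degree θ, and for some θ̃ ∈ Z/2Z, |Y_{j,θ̃}| > t_{θ̃} for all j. Then f is a graded identity of A. -/

import Mathlib

/-- A list product with at least `k` factors (marked by `g`) lying in a two-sided ideal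
factors as `a * q.prod` with `q` a list of `k` elements of the ideal. -/
lemma prodJ_aux {A V : Type} [Ring A] (J : TwoSidedIdeal A) (val : V → A) (g : V → Bool)
    (hg : ∀ x, g x = true → val x ∈ J) :
    ∀ (l : List V) (k : ℕ), k ≤ l.countP g →
      ∃ (a : A) (q : List A), q.length = k ∧ (∀ x ∈ q, x ∈ J) ∧
        (l.map val).prod = a * q.prod := by
  intro l
  induction l with
  | nil =>
      intro k hk
      simp only [List.countP_nil, Nat.le_zero] at hk
      subst hk
      exact ⟨1, [], rfl, by simp, by simp⟩
  | cons x xs ih =>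
      intro k hk
      rw [List.countP_cons] at hk
      by_cases hx : g x = true
      · rw [if_pos hx] at hk
        match k with
        | 0 => exact ⟨((x :: xs).map val).prod, [], rfl, by simp, by simp⟩
        | k + 1 =>
            obtain ⟨a, q, hlen, hq, hp⟩ := ih k (by omega)
            refine ⟨1, (val x * a) :: q, by simp [hlen], ?_, ?_⟩
            · intro y hy
              rcases List.mem_cons.mp hy with h | h
              · subst h; exact J.mul_mem_right _ _ (hg x hx)
              · exact hq y h
            · simp [hp, mul_assoc]
      · rw [if_neg hx, add_zero] at hk
        obtain ⟨a, q, hlen, hq, hp⟩ := ih k hk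
        exact ⟨val x * a, q, hlen, hq, by simp [hp, mul_assoc]⟩

/-- The product of the generators of a monoid algebra along a word is the corresponding
single basis element. -/
lemma prod_of_singles {F V : Type} [Field F] :
    ∀ l : List V,
      ((l.map fun q => (MonoidAlgebra.single (FreeMonoid.of q) 1 : MonoidAlgebra F (FreeMonoid V)))
          : List (MonoidAlgebra F (FreeMonoid V))).prod
        = (MonoidAlgebra.single (FreeMonoid.ofList l) 1 : MonoidAlgebra F (FreeMonoid V)) := by
  intro l
  induction l with
  | nil =>
      simp only [List.map_nil, List.prod_nil]
      rfl
  | cons x l ih =>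
      rw [List.map_cons, List.prod_cons, ih]
      have : (MonoidAlgebra.single (FreeMonoid.of x) 1 : MonoidAlgebra F (FreeMonoid V)) *
          MonoidAlgebra.single (FreeMonoid.ofList l) 1
          = (MonoidAlgebra.single (FreeMonoid.of x * FreeMonoid.ofList l) (1 * 1)
              : MonoidAlgebra F (FreeMonoid V)) :=
        MonoidAlgebra.single_mul_single _ _ _ _
      rw [this, one_mul]
      rfl

lemma symm_single_eq {F V : Type} [Field F] (m : FreeMonoid V) :
    (FreeAlgebra.equivMonoidAlgebraFreeMonoid (R := F) (X := V)).symm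
        (MonoidAlgebra.single m 1) = ((FreeMonoid.toList m).map (FreeAlgebra.ι F)).prod := by
  apply (FreeAlgebra.equivMonoidAlgebraFreeMonoid (R := F) (X := V)).injective
  rw [AlgEquiv.apply_symm_apply]
  induction m using FreeMonoid.recOn with
  | one => simp [MonoidAlgebra.one_def]
  | of_mul x m ih =>
      have htl : FreeMonoid.toList (FreeMonoid.of x * m) = x :: FreeMonoid.toList m := rfl
      rw [htl, List.map_cons, List.prod_cons, map_mul, ← ih]
      have h1 : (FreeAlgebra.equivMonoidAlgebraFreeMonoid (R := F) (X := V)) (FreeAlgebra.ι F x)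
          = MonoidAlgebra.single (FreeMonoid.of x) 1 := by
        simp [FreeAlgebra.equivMonoidAlgebraFreeMonoid]
      rw [h1, MonoidAlgebra.single_mul_single, one_mul]

/-- Evaluation of an element of the free algebra as a sum over its words. -/
lemma eval_eq {F V A : Type} [Field F] [Ring A] [Algebra F A] (u : V → A)
    (x : FreeAlgebra F V) :
    FreeAlgebra.lift F u x =
      (FreeAlgebra.equivMonoidAlgebraFreeMonoid (R := F) (X := V) x).coeff.sum
        (fun m c => c • ((FreeMonoid.toList m).map u).prod) := by
  set e := FreeAlgebra.equivMonoidAlgebraFreeMonoid (R := F) (X := V) with he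
  conv_lhs => rw [← e.symm_apply_apply x]
  generalize (e x) = y
  induction y using MonoidAlgebra.induction_linear with
  | zero => simp
  | add a b ha hb =>
      rw [map_add, map_add, ha, hb, MonoidAlgebra.coeff_add,
        Finsupp.sum_add_index' (by intros; rw [zero_smul]) (by intros; rw [add_smul])]
  | single m c =>
      have h1 : (MonoidAlgebra.single m c : MonoidAlgebra F (FreeMonoid V))
          = c • MonoidAlgebra.single m 1 := by
        rw [MonoidAlgebra.smul_single, smul_eq_mul, mul_one]
      rw [h1, map_smul, map_smul]
      have h2 : e.symm (MonoidAlgebra.single m 1) = ((FreeMonoid.toList m).map (FreeAlgebra.ι F)).prod :=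
        symm_single_eq m
      rw [h2, MonoidAlgebra.coeff_smul, Finsupp.sum_smul_index (fun m => by rw [zero_smul]),
        MonoidAlgebra.coeff_single, Finsupp.sum_single_index (by simp)]
      rw [map_list_prod]
      simp [List.map_map, Function.comp_def]

/-- Renaming of variables in the free associative algebra along a map `g : V → V`. -/
noncomputable def renameVars (F : Type) [Field F] {V : Type} (g : V → V) :
    FreeAlgebra F V →ₐ[F] FreeAlgebra F V :=
  FreeAlgebra.lift F (fun v => FreeAlgebra.ι F (g v))

/-- The permutation of the variables `(Σ j, Fin (t j)) ⊕ W` acting by `σ` on the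
`j`-th alternating collection `Y_{j,θ̃} = {j} × Fin (t j)` and fixing all other
variables. -/
def fiberPerm {s : ℕ} {t : Fin s → ℕ} {W : Type} (j : Fin s)
    (σ : Equiv.Perm (Fin (t j))) :
    ((Σ j' : Fin s, Fin (t j')) ⊕ W) → ((Σ j' : Fin s, Fin (t j')) ⊕ W) :=
  Sum.map
    (Equiv.sigmaCongrRight (fun j' =>
      if h : j' = j then
        (Equiv.permCongr (finCongr (congrArg t h)).symm σ : Equiv.Perm (Fin (t j')))
      else Equiv.refl (Fin (t j'))))
    id

/-- let `A = B ⊕ J(A)` be a finite dimensional superalgebra over a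
field of characteristic zero, with maximal graded semisimple part `B` and radical
`J(A)` nilpotent of degree `nd(A) = s`.  If a multilinear graded polynomial `f`
contains `s` disjoint collections of variables, alternating in the homogeneous
subset of degree `θ̃` of each collection, and each of these `θ̃`-subsets has more
than `dim B_θ̃` variables, then `f` is a graded identity of `A`. -/
theorem thick_alternating_is_graded_identity
    (F A : Type) [Field F] [CharZero F] [Ring A] [Algebra F A] [FiniteDimensional F A]
    (𝒜 : ZMod 2 → Submodule F A)
    (hmul : ∀ θ ξ : ZMod 2, ∀ x ∈ 𝒜 θ, ∀ y ∈ 𝒜 ξ, x * y ∈ 𝒜 (θ + ξ))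
    (θt : ZMod 2) (B : Submodule F A) (hB : B ≤ 𝒜 θt)
    (J : TwoSidedIdeal A) (s : ℕ)
    -- `J` is nilpotent of degree `s`:
    (hJnil : ∀ l : List A, (∀ x ∈ l, x ∈ J) → l.length = s → l.prod = 0)
    -- the degree-`θ̃` component of `A` splits as `B_θ̃ ⊕ J_θ̃`:
    (hdec : ∀ a ∈ 𝒜 θt, ∃ b ∈ B, ∃ r, r ∈ J ∧ r ∈ 𝒜 θt ∧ a = b + r)
    (t : Fin s → ℕ) (ht : ∀ j, Module.finrank F B < t j)
    (W : Type) [DecidableEq W] (parW : W → ZMod 2)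
    (f : FreeAlgebra F ((Σ j : Fin s, Fin (t j)) ⊕ W))
    -- `f` is multilinear (linear in each of its variables):
    (hlin : ∀ (p : (Σ j : Fin s, Fin (t j)) ⊕ W)
        (Bg : Type) [Ring Bg] [Algebra F Bg]
        (w : ((Σ j : Fin s, Fin (t j)) ⊕ W) → Bg),
        IsLinearMap F fun z => FreeAlgebra.lift F (Function.update w p z) f)
    -- `f` is alternating in each collection `Y_{j,θ̃}`:
    (halt : ∀ (j : Fin s) (σ : Equiv.Perm (Fin (t j))),
        renameVars F (fiberPerm (W := W) j σ) f = (Equiv.Perm.sign σ : ℤ) • f)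
    -- any graded substitution:
    (v : ((Σ j' : Fin s, Fin (t j')) ⊕ W) → A)
    (hvY : ∀ p : Σ j' : Fin s, Fin (t j'), v (Sum.inl p) ∈ 𝒜 θt)
    (hvW : ∀ w : W, v (Sum.inr w) ∈ 𝒜 (parW w)) :
    FreeAlgebra.lift F v f = 0 := by
  -- decompose the values of the alternating variables into semisimple and radical parts
  choose bb hbB rr hrJ hrA hsum using
    fun p : (Σ j : Fin s, Fin (t j)) => hdec (v (Sum.inl p)) (hvY p)
  -- splitting one variable using multilinearity
  have hsplit : ∀ (wf : ((Σ j : Fin s, Fin (t j)) ⊕ W) → A)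
      (p : (Σ j : Fin s, Fin (t j)) ⊕ W) (x y : A), wf p = x + y →
      FreeAlgebra.lift F wf f =
        FreeAlgebra.lift F (Function.update wf p x) f +
          FreeAlgebra.lift F (Function.update wf p y) f := by
    intro wf p x y hxy
    have L := hlin p A wf
    calc FreeAlgebra.lift F wf f
        = FreeAlgebra.lift F (Function.update wf p (wf p)) f := by
          rw [Function.update_eq_self]
      _ = FreeAlgebra.lift F (Function.update wf p (x + y)) f := by rw [hxy]
      _ = _ := L.map_add x y
  -- the multilinear expansion over all choices of semisimple/radical parts
  have hexp : FreeAlgebra.lift F v f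
      = ∑ T : Finset (Σ j : Fin s, Fin (t j)), FreeAlgebra.lift F
          (Sum.elim
            (fun p => if (if p ∈ Finset.univ then decide (p ∈ T) else false) then rr p else bb p)
            (fun w' => v (Sum.inr w')) : ((Σ j : Fin s, Fin (t j)) ⊕ W) → A) f := by
    have key : ∀ (S : Finset (Σ j : Fin s, Fin (t j))) (ε : (Σ j : Fin s, Fin (t j)) → Bool),
        FreeAlgebra.lift F
          (Sum.elim (fun p => if p ∈ S then v (Sum.inl p) else (if ε p then rr p else bb p))
            (fun w' => v (Sum.inr w')) : ((Σ j : Fin s, Fin (t j)) ⊕ W) → A) f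
        = ∑ T ∈ S.powerset, FreeAlgebra.lift F
            (Sum.elim (fun p => if (if p ∈ S then decide (p ∈ T) else ε p) then rr p else bb p)
              (fun w' => v (Sum.inr w')) : ((Σ j : Fin s, Fin (t j)) ⊕ W) → A) f := by
      intro S
      induction S using Finset.induction_on with
      | empty =>
          intro ε
          rw [Finset.powerset_empty, Finset.sum_singleton]
          refine congrArg (fun (g : ((Σ j : Fin s, Fin (t j)) ⊕ W) → A) => FreeAlgebra.lift F g f)
            (funext fun q => ?_)
          rcases q with p | w' <;> simp
      | @insert a S ha ih =>
          intro ε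
          have hval : (Sum.elim
              (fun p => if p ∈ insert a S then v (Sum.inl p) else (if ε p then rr p else bb p))
              (fun w' => v (Sum.inr w')) : ((Σ j : Fin s, Fin (t j)) ⊕ W) → A) (Sum.inl a)
              = bb a + rr a := by
            simp only [Sum.elim_inl, Finset.mem_insert_self, if_pos]
            exact hsum a
          rw [hsplit _ (Sum.inl a) (bb a) (rr a) hval]
          have h1 : Function.update (Sum.elim
              (fun p => if p ∈ insert a S then v (Sum.inl p) else (if ε p then rr p else bb p))
              (fun w' => v (Sum.inr w')) : ((Σ j : Fin s, Fin (t j)) ⊕ W) → A) (Sum.inl a) (bb a)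
              = (Sum.elim (fun p => if p ∈ S then v (Sum.inl p)
                  else (if Function.update ε a false p then rr p else bb p))
                (fun w' => v (Sum.inr w')) : ((Σ j : Fin s, Fin (t j)) ⊕ W) → A) := by
            funext q
            rcases q with p | w'
            · by_cases hpa : p = a
              · subst hpa
                simp [Function.update_apply, ha]
              · by_cases hpS : p ∈ S <;>
                  simp [Function.update_apply, hpa, hpS]
            · simp [Function.update_apply]
          have h2 : Function.update (Sum.elim
              (fun p => if p ∈ insert a S then v (Sum.inl p) else (if ε p then rr p else bb p))
              (fun w' => v (Sum.inr w')) : ((Σ j : Fin s, Fin (t j)) ⊕ W) → A) (Sum.inl a) (rr a)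
              = (Sum.elim (fun p => if p ∈ S then v (Sum.inl p)
                  else (if Function.update ε a true p then rr p else bb p))
                (fun w' => v (Sum.inr w')) : ((Σ j : Fin s, Fin (t j)) ⊕ W) → A) := by
            funext q
            rcases q with p | w'
            · by_cases hpa : p = a
              · subst hpa
                simp [Function.update_apply, ha]
              · by_cases hpS : p ∈ S <;>
                  simp [Function.update_apply, hpa, hpS]
            · simp [Function.update_apply]
          rw [h1, h2, ih (Function.update ε a false), ih (Function.update ε a true),
            Finset.sum_powerset_insert ha]
          congr 1
          · apply Finset.sum_congr rfl
            intro T hT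
            have hTa : a ∉ T := fun h => ha (Finset.mem_powerset.mp hT h)
            refine congrArg (fun (g : ((Σ j : Fin s, Fin (t j)) ⊕ W) → A) => FreeAlgebra.lift F g f)
              (funext fun q => ?_)
            rcases q with p | w'
            · by_cases hpa : p = a
              · subst hpa
                simp [Function.update_apply, ha, hTa]
              · by_cases hpS : p ∈ S <;>
                  simp [Function.update_apply, hpa, hpS]
            · rfl
          · apply Finset.sum_congr rfl
            intro T hT
            have hTS : T ⊆ S := Finset.mem_powerset.mp hT
            refine congrArg (fun (g : ((Σ j : Fin s, Fin (t j)) ⊕ W) → A) => FreeAlgebra.lift F g f)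
              (funext fun q => ?_)
            rcases q with p | w'
            · by_cases hpa : p = a
              · subst hpa
                simp [Function.update_apply, ha]
              · have hpiT : p ∈ insert a T ↔ p ∈ T := by
                  simp [Finset.mem_insert, hpa]
                by_cases hpS : p ∈ S
                · simp [Function.update_apply, hpa, hpS, hpiT]
                · have hpT : p ∉ T := fun h => hpS (hTS h)
                  simp [Function.update_apply, hpa, hpS, hpiT, hpT]
            · rfl
    have h0 := key Finset.univ (fun _ => false)
    rw [Finset.powerset_univ] at h0
    have hv : (Sum.elim
        (fun p => if p ∈ (Finset.univ : Finset (Σ j : Fin s, Fin (t j))) then v (Sum.inl p)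
          else (if false then rr p else bb p))
        (fun w' => v (Sum.inr w')) : ((Σ j : Fin s, Fin (t j)) ⊕ W) → A) = v := by
      funext q
      rcases q with p | w'
      · simp
      · rfl
    rw [hv] at h0
    rw [h0]
  -- evaluations with two equal values in one alternating collection vanish
  have halt0 : ∀ (wf : ((Σ j : Fin s, Fin (t j)) ⊕ W) → A) (j : Fin s)
      (i1 i2 : Fin (t j)), i1 ≠ i2 →
      wf (Sum.inl ⟨j, i1⟩) = wf (Sum.inl ⟨j, i2⟩) →
      FreeAlgebra.lift F wf f = 0 := by
    intro wf j i1 i2 hne hval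
    set σ := Equiv.swap i1 i2 with hσ
    have hcomp : (FreeAlgebra.lift F wf).comp (renameVars F (fiberPerm (W := W) j σ))
        = FreeAlgebra.lift F (wf ∘ fiberPerm (W := W) j σ) := by
      apply FreeAlgebra.hom_ext
      funext q
      simp [renameVars]
    have hfix : wf ∘ fiberPerm (W := W) j σ = wf := by
      funext q
      rcases q with ⟨j', i⟩ | w'
      · simp only [Function.comp_apply, fiberPerm, Sum.map_inl, Equiv.sigmaCongrRight_apply]
        by_cases hj : j' = j
        · subst hj
          rw [dif_pos rfl]
          have hperm : (Equiv.permCongr (finCongr (congrArg t (rfl : j' = j'))).symm σ) i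
              = σ i := by
            apply Fin.ext
            simp [Equiv.permCongr_apply]
          rw [hperm]
          rcases eq_or_ne i i1 with h | h
          · subst h
            rw [hσ, Equiv.swap_apply_left]
            exact hval.symm
          · rcases eq_or_ne i i2 with h' | h'
            · subst h'
              rw [hσ, Equiv.swap_apply_right]
              exact hval
            · rw [hσ, Equiv.swap_apply_of_ne_of_ne h h']
        · rw [dif_neg hj]
          rfl
      · rfl
    have h1 := congrArg (FreeAlgebra.lift F wf) (halt j σ)
    rw [← AlgHom.comp_apply, hcomp, hfix] at h1
    rw [map_zsmul, hσ, Equiv.Perm.sign_swap hne] at h1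
    have h2 : FreeAlgebra.lift F wf f = - FreeAlgebra.lift F wf f := by
      simpa using h1
    have h3 : (2 : F) • FreeAlgebra.lift F wf f = 0 := by
      rw [two_smul]
      nth_rewrite 1 [h2]
      rw [neg_add_cancel]
    rcases smul_eq_zero.mp h3 with h | h
    · exact absurd h two_ne_zero
    · exact h
  -- evaluations with one whole collection of values inside B vanish
  have hcase1 : ∀ (wf : ((Σ j : Fin s, Fin (t j)) ⊕ W) → A) (j : Fin s),
      (∀ i : Fin (t j), wf (Sum.inl ⟨j, i⟩) ∈ B) →
      FreeAlgebra.lift F wf f = 0 := by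
    intro wf j hBv
    have hnli : ¬ LinearIndependent F
        (fun i : Fin (t j) => (⟨wf (Sum.inl ⟨j, i⟩), hBv i⟩ : B)) := by
      intro hli
      have := hli.fintype_card_le_finrank
      rw [Fintype.card_fin] at this
      exact absurd this (not_le.mpr (ht j))
    obtain ⟨g, hg0, i0, hgi0⟩ := Fintype.not_linearIndependent_iff.mp hnli
    have hsum0 : ∑ i : Fin (t j), g i • wf (Sum.inl ⟨j, i⟩) = 0 := by
      have := congrArg (Subtype.val : B → A) hg0
      simpa using this
    have heq : g i0 • wf (Sum.inl ⟨j, i0⟩)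
        = - ∑ i ∈ Finset.univ.erase i0, g i • wf (Sum.inl ⟨j, i⟩) := by
      apply eq_neg_of_add_eq_zero_left
      rw [← Finset.add_sum_erase Finset.univ (fun i => g i • wf (Sum.inl ⟨j, i⟩))
        (Finset.mem_univ i0)] at hsum0
      exact hsum0
    set p0 : (Σ j : Fin s, Fin (t j)) ⊕ W := Sum.inl ⟨j, i0⟩ with hp0
    let Lm := IsLinearMap.mk' _ (hlin p0 A wf)
    have hLm : ∀ z : A, Lm z = FreeAlgebra.lift F (Function.update wf p0 z) f := fun z => rfl
    have hzero : ∀ i : Fin (t j), i ≠ i0 → Lm (wf (Sum.inl ⟨j, i⟩)) = 0 := by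
      intro i hi
      rw [hLm]
      refine halt0 _ j i0 i (fun h => hi h.symm) ?_
      have h1 : Function.update wf p0 (wf (Sum.inl ⟨j, i⟩)) p0 = wf (Sum.inl ⟨j, i⟩) :=
        Function.update_self _ _ _
      have h2 : Function.update wf p0 (wf (Sum.inl ⟨j, i⟩)) (Sum.inl ⟨j, i⟩)
          = wf (Sum.inl ⟨j, i⟩) := by
        apply Function.update_of_ne
        simp [hp0, hi]
      rw [hp0] at h1
      rw [h1, h2]
    have hfinal : g i0 • FreeAlgebra.lift F wf f = 0 := by
      have hself : FreeAlgebra.lift F wf f = Lm (wf p0) := by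
        rw [hLm, Function.update_eq_self]
      have hwp0 : wf p0 = wf (Sum.inl ⟨j, i0⟩) := by rw [hp0]
      calc g i0 • FreeAlgebra.lift F wf f = g i0 • Lm (wf p0) := by rw [hself]
        _ = Lm (g i0 • wf p0) := (map_smul Lm _ _).symm
        _ = Lm (- ∑ i ∈ Finset.univ.erase i0, g i • wf (Sum.inl ⟨j, i⟩)) := by
            rw [hwp0, heq]
        _ = - ∑ i ∈ Finset.univ.erase i0, g i • Lm (wf (Sum.inl ⟨j, i⟩)) := by
            rw [map_neg, map_sum]
            simp only [map_smul]
        _ = 0 := by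
            rw [Finset.sum_eq_zero (fun i hi => by
              rw [hzero i (Finset.ne_of_mem_erase hi), smul_zero]), neg_zero]
    rcases smul_eq_zero.mp hfinal with h | h
    · exact absurd h hgi0
    · exact h
  -- every word in the support of `f` contains every variable
  have hcontain : ∀ (p : (Σ j : Fin s, Fin (t j)) ⊕ W)
      (m₀ : FreeMonoid ((Σ j : Fin s, Fin (t j)) ⊕ W)),
      m₀ ∈ (FreeAlgebra.equivMonoidAlgebraFreeMonoid
        (R := F) (X := (Σ j : Fin s, Fin (t j)) ⊕ W) f).coeff.support →
      p ∈ FreeMonoid.toList m₀ := by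
    intro p m₀ hm₀
    classical
    by_contra hp
    set w : ((Σ j : Fin s, Fin (t j)) ⊕ W) → MonoidAlgebra F (FreeMonoid ((Σ j : Fin s, Fin (t j)) ⊕ W)) :=
      fun q => MonoidAlgebra.single (FreeMonoid.of q) 1 with hw
    have h0 : FreeAlgebra.lift F (Function.update w p 0) f = 0 :=
      (hlin p (MonoidAlgebra F (FreeMonoid ((Σ j : Fin s, Fin (t j)) ⊕ W))) w).map_zero
    have hev := eval_eq (Function.update w p 0) f
    rw [h0] at hev
    haveI : DecidableEq (FreeMonoid ((Σ j : Fin s, Fin (t j)) ⊕ W)) := inferInstanceAs (DecidableEq (List ((Σ j : Fin s, Fin (t j)) ⊕ W)))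
    have hev0 := congrArg (fun z : MonoidAlgebra F (FreeMonoid ((Σ j : Fin s, Fin (t j)) ⊕ W)) => z.coeff m₀) hev.symm
    simp only [MonoidAlgebra.coeff_zero, Finsupp.coe_zero, Pi.zero_apply, Finsupp.sum] at hev0
    rw [MonoidAlgebra.coeff_sum, Finsupp.finset_sum_apply] at hev0
    rw [Finset.sum_eq_single m₀ ?hne ?hnotmem] at hev0
    case hne =>
      intro m hm hmne
      rw [MonoidAlgebra.coeff_smul, Finsupp.smul_apply]
      rcases Classical.em (p ∈ FreeMonoid.toList m) with hpm | hpm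
      · have hz : (((FreeMonoid.toList m).map (Function.update w p 0))
            : List (MonoidAlgebra F (FreeMonoid ((Σ j : Fin s, Fin (t j)) ⊕ W)))).prod = 0 := by
          apply List.prod_eq_zero
          exact List.mem_map.mpr ⟨p, hpm, Function.update_self _ _ _⟩
        rw [hz]
        simp
      · have hmap : (FreeMonoid.toList m).map (Function.update w p 0)
            = (FreeMonoid.toList m).map w := by
          apply List.map_congr_left
          intro q hq
          refine Function.update_of_ne (fun h => hpm ?_) _ _
          rwa [h] at hq
        rw [hmap, prod_of_singles, FreeMonoid.ofList_toList]
        rw [MonoidAlgebra.coeff_single, Finsupp.single_apply, if_neg hmne, smul_zero]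
    case hnotmem =>
      intro hmem
      exact absurd hm₀ hmem
    have hmap : (FreeMonoid.toList m₀).map (Function.update w p 0)
        = (FreeMonoid.toList m₀).map w := by
      apply List.map_congr_left
      intro q hq
      refine Function.update_of_ne (fun h => hp ?_) _ _
      rwa [h] at hq
    rw [hmap, prod_of_singles, FreeMonoid.ofList_toList, MonoidAlgebra.coeff_smul, Finsupp.smul_apply,
      MonoidAlgebra.coeff_single, Finsupp.single_apply, if_pos rfl, smul_eq_mul, mul_one] at hev0
    exact absurd hev0 (Finsupp.mem_support_iff.mp hm₀)
  -- evaluations with a radical value in every collection vanish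
  have hcase2 : ∀ (uT : ((Σ j : Fin s, Fin (t j)) ⊕ W) → A)
      (T : Finset (Σ j : Fin s, Fin (t j))),
      (∀ p ∈ T, uT (Sum.inl p) = rr p) →
      (∀ j : Fin s, ∃ i : Fin (t j), (⟨j, i⟩ : Σ j : Fin s, Fin (t j)) ∈ T) →
      FreeAlgebra.lift F uT f = 0 := by
    intro uT T huT hT
    choose ii hii using hT
    set psel : Fin s → (Σ j : Fin s, Fin (t j)) ⊕ W := fun j => Sum.inl ⟨j, ii j⟩ with hpsel
    have hinj : Function.Injective psel := by
      intro a b hab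
      exact congrArg Sigma.fst (Sum.inl_injective hab)
    set Tsel : Finset ((Σ j : Fin s, Fin (t j)) ⊕ W) := Finset.univ.image psel with hTsel
    have hcard : Tsel.card = s := by
      rw [hTsel, Finset.card_image_of_injective _ hinj, Finset.card_univ, Fintype.card_fin]
    rw [eval_eq]
    apply Finset.sum_eq_zero
    intro m hm
    suffices hz : (((FreeMonoid.toList m).map uT) : List A).prod = 0 by
      dsimp only
      rw [hz, smul_zero]
    have hcount : s ≤ (FreeMonoid.toList m).countP (fun q => decide (q ∈ Tsel)) := by
      rw [List.countP_eq_length_filter]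
      have hsub : Tsel ⊆ ((FreeMonoid.toList m).filter
          (fun q => decide (q ∈ Tsel))).toFinset := by
        intro q hq
        rw [List.mem_toFinset, List.mem_filter]
        exact ⟨by
          obtain ⟨j, _, rfl⟩ := Finset.mem_image.mp hq
          exact hcontain _ m hm, by simpa using hq⟩
      calc s = Tsel.card := hcard.symm
        _ ≤ _ := Finset.card_le_card hsub
        _ ≤ _ := List.toFinset_card_le _
    obtain ⟨a, q, hlen, hq, hp⟩ := prodJ_aux J uT (fun q => decide (q ∈ Tsel))
      (fun x hx => by
        obtain ⟨j, _, rfl⟩ := Finset.mem_image.mp (of_decide_eq_true hx)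
        rw [huT _ (hii j)]
        exact hrJ _) (FreeMonoid.toList m) s hcount
    rw [hp, hJnil q hq hlen, mul_zero]
  -- put everything together
  rw [hexp]
  apply Finset.sum_eq_zero
  intro T _
  by_cases hT : ∀ j : Fin s, ∃ i : Fin (t j), (⟨j, i⟩ : Σ j : Fin s, Fin (t j)) ∈ T
  · refine hcase2 _ T (fun p hpT => ?_) hT
    simp [hpT]
  · push_neg at hT
    obtain ⟨j, hj⟩ := hT
    refine hcase1 _ j (fun i => ?_)
    have : (Sum.elim
        (fun p => if (if p ∈ Finset.univ then decide (p ∈ T) else false) then rr p else bb p)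
        (fun w' => v (Sum.inr w')) : ((Σ j : Fin s, Fin (t j)) ⊕ W) → A) (Sum.inl ⟨j, i⟩)
        = bb ⟨j, i⟩ := by
      simp [hj i]
    rw [this]
    exact hbB _
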